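/- The set V ∪ E, where V = {ab^i a : i ≥ 1} and E = {ab^i aaab^j a : i,j ≥ 1}, is an infinite code over {a,b}, and V ∩ E = ∅. -/

import Mathlib

def wordV (m : ℕ) : List Bool := false :: (List.replicate m true ++ [false])

def wordE (m n : ℕ) : List Bool :=
  false :: (List.replicate m true ++ [false, false, false] ++ List.replicate n true ++ [false])

def IsCode (C : Set (List Bool)) : Prop :=
  ∀ l₁ l₂ : List (List Bool), (∀ w ∈ l₁, w ∈ C) → (∀ w ∈ l₂, w ∈ C) →
    l₁.flatten = l₂.flatten → l₁ = l₂

/-- V = {a b^i a : i ≥ 1}. -/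
def Vset : Set (List Bool) := {w | ∃ m, 1 ≤ m ∧ w = wordV m}

/-- E = {a b^i a a a b^j a : i, j ≥ 1}. -/
def Eset : Set (List Bool) := {w | ∃ m n, 1 ≤ m ∧ 1 ≤ n ∧ w = wordE m n}

lemma blockEq : ∀ m m' (x y : List Bool),
    List.replicate m true ++ false :: x = List.replicate m' true ++ false :: y →
    m = m' ∧ x = y := by
  intro m
  induction m with
  | zero =>
    intro m' x y h
    cases m' with
    | zero => simpa using h
    | succ k => simp [List.replicate_succ] at h
  | succ k ih =>
    intro m' x y h
    cases m' with
    | zero => simp [List.replicate_succ] at h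
    | succ k' =>
      simp only [List.replicate_succ, List.cons_append, List.cons.injEq, true_and] at h
      obtain ⟨h1, h2⟩ := ih k' x y h
      exact ⟨by omega, h2⟩

lemma wordV_append (m : ℕ) (r : List Bool) :
    wordV m ++ r = false :: (List.replicate m true ++ false :: r) := by
  simp [wordV]

lemma wordE_append (m n : ℕ) (r : List Bool) :
    wordE m n ++ r =
      false :: (List.replicate m true ++
        false :: (false :: false :: (List.replicate n true ++ false :: r))) := by
  simp [wordE]

lemma head_shape (w : List Bool) (hw : w ∈ Vset ∪ Eset) :
    ∃ r, w = false :: true :: r := by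
  rcases hw with ⟨m, hm, rfl⟩ | ⟨m, n, hm, hn, rfl⟩
  · obtain ⟨k, rfl⟩ : ∃ k, m = k + 1 := ⟨m - 1, by omega⟩
    exact ⟨List.replicate k true ++ [false], by simp [wordV, List.replicate_succ]⟩
  · obtain ⟨k, rfl⟩ : ∃ k, m = k + 1 := ⟨m - 1, by omega⟩
    exact ⟨List.replicate k true ++ [false, false, false] ++ List.replicate n true ++ [false],
      by simp [wordE, List.replicate_succ]⟩

lemma mem_rest (l : List (List Bool)) (hl : ∀ w ∈ l, w ∈ Vset ∪ Eset) :
    l.flatten = [] ∨ ∃ s, l.flatten = false :: true :: s := by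
  cases l with
  | nil => left; rfl
  | cons w l =>
    right
    obtain ⟨r, hr⟩ := head_shape w (hl w (by simp))
    exact ⟨r ++ l.flatten, by simp [hr]⟩

lemma first_eq (w₁ w₂ r₁ r₂ : List Bool)
    (h₁ : w₁ ∈ Vset ∪ Eset) (h₂ : w₂ ∈ Vset ∪ Eset)
    (p₁ : r₁ = [] ∨ ∃ s, r₁ = false :: true :: s)
    (p₂ : r₂ = [] ∨ ∃ s, r₂ = false :: true :: s)
    (h : w₁ ++ r₁ = w₂ ++ r₂) : w₁ = w₂ := by
  rcases h₁ with ⟨m, hm, rfl⟩ | ⟨m, n, hm, hn, rfl⟩ <;>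
    rcases h₂ with ⟨m', hm', rfl⟩ | ⟨m', n', hm', hn', rfl⟩
  · -- V V
    rw [wordV_append, wordV_append] at h
    obtain ⟨hmm, -⟩ := blockEq m m' _ _ (by injection h)
    rw [hmm]
  · -- V E
    rw [wordV_append, wordE_append] at h
    obtain ⟨hmm, hr⟩ := blockEq m m' _ _ (by injection h)
    exfalso
    rcases p₁ with rfl | ⟨s, rfl⟩
    · exact absurd hr (by simp)
    · simp at hr
  · -- E V
    rw [wordE_append, wordV_append] at h
    obtain ⟨hmm, hr⟩ := blockEq m m' _ _ (by injection h)
    exfalso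
    rcases p₂ with rfl | ⟨s, rfl⟩
    · exact absurd hr (by simp)
    · simp at hr
  · -- E E
    rw [wordE_append, wordE_append] at h
    obtain ⟨hmm, hr⟩ := blockEq m m' _ _ (by injection h)
    simp only [List.cons.injEq, true_and] at hr
    obtain ⟨hnn, -⟩ := blockEq n n' _ _ hr
    rw [hmm, hnn]

lemma code_aux : IsCode (Vset ∪ Eset) := by
  intro l₁ l₂ h₁ h₂ h
  induction l₁ generalizing l₂ with
  | nil =>
    cases l₂ with
    | nil => rfl
    | cons w l =>
      exfalso
      obtain ⟨r, hr⟩ := head_shape w (h₂ w (by simp))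
      simp [hr] at h
  | cons w l ih =>
    cases l₂ with
    | nil =>
      exfalso
      obtain ⟨r, hr⟩ := head_shape w (h₁ w (by simp))
      simp [hr] at h
    | cons w' l' =>
      simp only [List.flatten_cons] at h
      have hw : w = w' :=
        first_eq w w' l.flatten l'.flatten (h₁ w (by simp)) (h₂ w' (by simp))
          (mem_rest l (fun x hx => h₁ x (by simp [hx])))
          (mem_rest l' (fun x hx => h₂ x (by simp [hx]))) h
      subst hw
      have hj : l.flatten = l'.flatten := by
        have := List.append_cancel_left h
        exact this
      have : l = l' := ih l' (fun x hx => h₁ x (List.mem_cons_of_mem _ hx))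
        (fun x hx => h₂ x (List.mem_cons_of_mem _ hx)) hj
      rw [this]

theorem stmt1 :
    IsCode (Vset ∪ Eset) ∧ (Vset ∪ Eset).Infinite ∧ Vset ∩ Eset = ∅ := by
  refine ⟨code_aux, ?_, ?_⟩
  · refine Set.infinite_of_injective_forall_mem (f := fun k : ℕ => wordV (k + 1)) ?_ ?_
    · intro a b hab
      have : (wordV (a+1)).length = (wordV (b+1)).length := by simp only at hab; rw [hab]
      simp [wordV] at this
      omega
    · intro a
      exact Or.inl ⟨a + 1, by omega, rfl⟩
  · ext w
    simp only [Set.mem_inter_iff, Set.mem_empty_iff_false, iff_false]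
    rintro ⟨⟨m, hm, rfl⟩, ⟨m', n', hm', hn', he⟩⟩
    have h : wordV m ++ ([] : List Bool) = wordE m' n' ++ ([] : List Bool) := by
      simp [he]
    rw [wordV_append, wordE_append] at h
    obtain ⟨-, hr⟩ := blockEq m m' _ _ (by injection h)
    exact absurd hr (by simp)
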